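/- Let ‖·‖ be the Euclidean norm on ℝ^d and let δ ∈ (0,1]. For y ∈ ℝ^d set C_y = {y + t(y − z) : z ∈ ℝ^d, ‖z‖ < δ, t > 0}. Then there exists λ ∈ (0,1), depending only on δ, such that for all x, y ∈ ℝ^d with 1 ≤ ‖y‖ ≤ 1/δ, ‖x‖ ≤ 1/δ and x ∉ C_y, one has ‖x‖ − ‖y‖ ≤ λ‖x − y‖. -/

import Mathlib

open scoped RealInnerProductSpace
open Set

/-- For `δ ∈ (0,1]` and `C_y = {y + t(y − z) : ‖z‖ < δ, t > 0}`, there is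
`λ ∈ (0,1)` depending only on `δ` such that whenever `1 ≤ ‖y‖ ≤ 1/δ`, `‖x‖ ≤ 1/δ` and
`x ∉ C_y`, one has `‖x‖ − ‖y‖ ≤ λ‖x − y‖`. -/
private lemma aux_sq_le {a b : ℝ} (ha : 0 ≤ a) (hb : 0 ≤ b) (h : a^2 ≤ b^2) : a ≤ b := by
  nlinarith only [h, ha, hb]

theorem norm_diff_le_of_not_mem_cone (d : ℕ) (δ : ℝ) (hδ0 : 0 < δ) (hδ1 : δ ≤ 1) :
    ∃ lam : ℝ, 0 < lam ∧ lam < 1 ∧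
      ∀ x y : EuclideanSpace ℝ (Fin d),
        1 ≤ ‖y‖ → ‖y‖ ≤ 1 / δ → ‖x‖ ≤ 1 / δ →
        x ∉ {w : EuclideanSpace ℝ (Fin d) |
              ∃ (z : EuclideanSpace ℝ (Fin d)) (t : ℝ),
                ‖z‖ < δ ∧ 0 < t ∧ w = y + t • (y - z)} →
        ‖x‖ - ‖y‖ ≤ lam * ‖x - y‖ := by
  set κ : ℝ := Real.sqrt (1 - δ^4) with hκdef
  have hδ4 : δ^4 ≤ 1 := pow_le_one₀ hδ0.le hδ1
  have hδ4' : 0 < δ^4 := by positivity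
  have hκ0 : 0 ≤ κ := Real.sqrt_nonneg _
  have hκsq : κ^2 = 1 - δ^4 := Real.sq_sqrt (by linarith)
  have hκ1 : κ < 1 := by nlinarith only [hκsq, hκ0, hδ4']
  set lamA : ℝ := Real.sqrt ((1 - δ)/(1 + δ)) with hlamAdef
  have hA0 : 0 ≤ lamA := Real.sqrt_nonneg _
  have hAsq : lamA^2 = (1 - δ)/(1 + δ) := Real.sq_sqrt (div_nonneg (by linarith) (by linarith))
  have hAsq' : (1 - δ)/(1 + δ) < 1 := by
    rw [div_lt_one (by linarith)]; linarith
  have hA1 : lamA < 1 := by nlinarith only [hAsq, hA0, hAsq']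
  set lam0 : ℝ := 1 - (1 - κ) * δ / (δ + 2) with hlam0def
  have hlam0pos : 0 < lam0 := by
    have h1 : (1 - κ) * δ / (δ + 2) < 1 := by
      rw [div_lt_one (by linarith)]
      nlinarith only [mul_nonneg hκ0 hδ0.le, hδ0]
    simp only [hlam0def]; linarith
  have hlam01 : lam0 < 1 := by
    have : 0 < (1 - κ) * δ / (δ + 2) := div_pos (mul_pos (by linarith) hδ0) (by linarith)
    simp only [hlam0def]; linarith
  refine ⟨max lamA lam0, lt_of_lt_of_le hlam0pos (le_max_right _ _), max_lt hA1 hlam01, ?_⟩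
  set lam : ℝ := max lamA lam0 with hlamdef
  have hlampos : 0 < lam := lt_of_lt_of_le hlam0pos (le_max_right _ _)
  have hlamlt1 : lam < 1 := max_lt hA1 hlam01
  intro x y hy1 hy2 hx2 hnot
  -- the cone condition
  have hcone : ∀ s : ℝ, 0 < s → δ ≤ ‖y - s • (x - y)‖ := by
    intro s hs
    by_contra hlt
    push_neg at hlt
    refine hnot ⟨y - s • (x - y), 1/s, hlt, by positivity, ?_⟩
    have hyz : y - (y - s • (x - y)) = s • (x - y) := by abel
    rw [hyz, smul_smul, one_div_mul_cancel hs.ne', one_smul]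
    abel
  by_cases hpq : ‖x‖ ≤ ‖y‖
  · have h0 : 0 ≤ lam * ‖x - y‖ := mul_nonneg hlampos.le (norm_nonneg _)
    linarith
  push_neg at hpq
  have hr0 : 0 < ‖x - y‖ := by
    rw [norm_pos_iff]
    intro h
    rw [sub_eq_zero] at h
    rw [h] at hpq
    exact lt_irrefl _ hpq
  have hp0 : (0:ℝ) ≤ ‖x‖ := norm_nonneg _
  have hq0 : (0:ℝ) ≤ ‖y‖ := norm_nonneg _
  have hδp : ‖x‖ * δ ≤ 1 := (le_div_iff₀ hδ0).mp hx2
  have hδq : ‖y‖ * δ ≤ 1 := (le_div_iff₀ hδ0).mp hy2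
  set p := ‖x‖
  set q := ‖y‖
  set r := ‖x - y‖
  set a : ℝ := ⟪y, x - y⟫ with hadef
  have hpsq : p^2 = q^2 + 2*a + r^2 := by
    have hx' : x = y + (x - y) := by abel
    calc p^2 = ‖y + (x - y)‖^2 := by rw [← hx']
    _ = q^2 + 2*a + r^2 := by rw [norm_add_sq_real]
  have hlamr0 : 0 ≤ lam * r := mul_nonneg hlampos.le hr0.le
  rcases le_or_gt a 0 with ha | ha
  · -- case a ≤ 0
    have hr2 : p^2 - q^2 ≤ r^2 := by linarith only [hpsq, ha]
    have hlamA : lamA ≤ lam := le_max_left _ _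
    have hAsq2 : lamA^2 ≤ lam^2 := pow_le_pow_left₀ hA0 hlamA 2
    have h1 : (p - q) * (1 + δ) ≤ (p + q) * (1 - δ) := by
      have h1' : p * δ ≤ 1 := hδp
      nlinarith only [h1', hy1]
    have h2 : (p - q) ≤ (1 - δ)/(1 + δ) * (p + q) := by
      rw [div_mul_eq_mul_div, le_div_iff₀ (by linarith : (0:ℝ) < 1 + δ)]
      linarith only [h1]
    have h4 : (p - q) * (p + q) ≤ r^2 := by
      calc (p - q) * (p + q) = p^2 - q^2 := by ring
      _ ≤ r^2 := hr2
    have hApos : (0:ℝ) ≤ (1 - δ)/(1 + δ) := div_nonneg (by linarith) (by linarith)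
    have h5 : (p - q)^2 ≤ (1 - δ)/(1 + δ) * r^2 := by
      calc (p - q)^2 = (p - q) * (p - q) := sq (p - q) ▸ by ring
      _ ≤ ((1 - δ)/(1 + δ) * (p + q)) * (p - q) :=
          mul_le_mul_of_nonneg_right h2 (by linarith only [hpq])
      _ = (1 - δ)/(1 + δ) * ((p - q) * (p + q)) := by ring
      _ ≤ (1 - δ)/(1 + δ) * r^2 := mul_le_mul_of_nonneg_left h4 hApos
    have h3 : (p - q)^2 ≤ (lam * r)^2 := by
      have h6 : (1 - δ)/(1 + δ) * r^2 ≤ lam^2 * r^2 := by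
        have := mul_le_mul_of_nonneg_right hAsq2 (sq_nonneg r)
        rw [hAsq] at this
        linarith only [this]
      calc (p - q)^2 ≤ (1 - δ)/(1 + δ) * r^2 := h5
      _ ≤ lam^2 * r^2 := h6
      _ = (lam * r)^2 := by ring
    have h7 := aux_sq_le (by linarith only [hpq]) hlamr0 h3
    linarith only [h7]
  · -- case a > 0
    have hrr : (0:ℝ) < r^2 := by positivity
    have hδs := hcone (a / r^2) (div_pos ha hrr)
    have hexp : ‖y - (a/r^2) • (x - y)‖^2 = q^2 - 2*(a/r^2)*a + (a/r^2)^2*r^2 := by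
      rw [norm_sub_sq_real, real_inner_smul_right, norm_smul, Real.norm_eq_abs, mul_pow, sq_abs]
      ring
    have hδ2 : δ^2 ≤ q^2 - 2*(a/r^2)*a + (a/r^2)^2*r^2 := by
      rw [← hexp]
      exact pow_le_pow_left₀ hδ0.le hδs 2
    have he : q^2 - 2*(a/r^2)*a + (a/r^2)^2*r^2 = q^2 - a^2/r^2 := by
      field_simp
      ring
    rw [he] at hδ2
    have hasq : a^2 ≤ (q^2 - δ^2) * r^2 := by
      have h9 : a^2 / r^2 ≤ q^2 - δ^2 := by linarith only [hδ2]
      calc a^2 = a^2/r^2 * r^2 := by field_simp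
      _ ≤ (q^2 - δ^2) * r^2 := mul_le_mul_of_nonneg_right h9 hrr.le
    have h10 : q^2 * δ^2 ≤ 1 := by
      nlinarith only [hδq, mul_nonneg hq0 hδ0.le]
    have hq2d : q^2 - δ^2 ≤ (1 - δ^4) * q^2 := by
      have h11 := mul_le_mul_of_nonneg_left h10 (sq_nonneg δ)
      nlinarith only [h11]
    have ha_le : a ≤ κ * q * r := by
      have h12 := mul_le_mul_of_nonneg_right hq2d (sq_nonneg r)
      have h13 : a^2 ≤ (κ * q * r)^2 := by
        have h14 : (κ * q * r)^2 = (1 - δ^4) * q^2 * r^2 := by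
          rw [mul_pow, mul_pow, hκsq]
        rw [h14]
        calc a^2 ≤ (q^2 - δ^2) * r^2 := hasq
        _ ≤ (1 - δ^4) * q^2 * r^2 := h12
      exact aux_sq_le ha.le (mul_nonneg (mul_nonneg hκ0 hq0) hr0.le) h13
    have hp2 : p^2 ≤ q^2 + 2*(κ*q*r) + r^2 := by linarith only [hpsq, ha_le]
    have hrle : r ≤ 2/δ := by
      have h15 := norm_sub_le x y
      have h16 : (1:ℝ)/δ + 1/δ = 2/δ := by ring
      calc r ≤ p + q := h15
      _ ≤ 1/δ + 1/δ := by linarith only [hx2, hy2]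
      _ = 2/δ := h16
    have hδr : δ * r ≤ 2 := by
      rw [le_div_iff₀ hδ0] at hrle
      linarith only [hrle]
    have hlam0le : lam0 ≤ lam := le_max_right _ _
    have hκ1' : (0:ℝ) ≤ 1 - κ := by linarith only [hκ1]
    have F1 : (1 - lam) * (δ + 2) ≤ (1 - κ) * δ := by
      have h8 : 1 - lam ≤ (1 - κ) * δ / (δ + 2) := by
        simp only [hlam0def] at hlam0le
        linarith only [hlam0le]
      exact (le_div_iff₀ (by linarith only [hδ0] : (0:ℝ) < δ + 2)).mp h8
    have s1 : (1 - lam) * r * (δ + 2) ≤ (1 - κ) * (δ * r) := by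
      have := mul_le_mul_of_nonneg_right F1 hr0.le
      nlinarith only [this]
    have s2 : (1 - κ) * (δ * r) ≤ 2 * (1 - κ) :=
      by nlinarith only [mul_le_mul_of_nonneg_left hδr hκ1']
    have F3 : 2 * (1 - κ) ≤ (lam - κ) * (δ + 2) := by nlinarith only [F1]
    have s3 : (1 - lam) * r * (δ + 2) ≤ (lam - κ) * (δ + 2) := by
      linarith only [s1, s2, F3]
    have s4 : (1 - lam) * r ≤ lam - κ :=
      (mul_le_mul_iff_of_pos_right (by linarith only [hδ0] : (0:ℝ) < δ + 2)).mp s3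
    have hlamκ : (0:ℝ) ≤ lam - κ :=
      le_trans (mul_nonneg (by linarith only [hlamlt1]) hr0.le) s4
    have s5 : (1 - lam^2) * r ≤ 2 * ((1 - lam) * r) := by
      nlinarith only [mul_nonneg hr0.le (sq_nonneg (1 - lam))]
    have s7 : 2 * (lam - κ) ≤ 2 * (lam - κ) * q := by
      have := mul_le_mul_of_nonneg_left hy1 (by linarith only [hlamκ] : (0:ℝ) ≤ 2 * (lam - κ))
      nlinarith only [this]
    have key : (1 - lam^2) * r ≤ 2 * (lam - κ) * q := by
      linarith only [s5, s4, s7]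
    have keyr := mul_le_mul_of_nonneg_right key hr0.le
    have hsum : p^2 ≤ (q + lam * r)^2 := by
      nlinarith only [hp2, keyr]
    have h17 : p ≤ q + lam * r :=
      aux_sq_le hp0 (by linarith only [hq0, hlamr0]) hsum
    linarith only [h17]
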